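/- Let 𝒳 be a compact metric space with a nondegenerate Borel probability measure ℙ, and let x_1, …, x_N be i.i.d. samples from ℙ. Then for every r > 0, the probability that the balls B_r(x_n), n = 1,…,N, cover 𝒳 is at least 1 − 𝒩(𝒳, r/2) · η(r/2)^N, where η(ρ) := sup_{x ∈ 𝒳} (1 − ℙ(B_ρ(x))) < 1 and 𝒩(𝒳, ε) is the covering number of 𝒳 at scale ε. -/

import Mathlib

open Metric MeasureTheory ProbabilityTheory
open scoped ENNReal

/-- Covering number of a metric space at scale `ε` (centers anywhere). -/
noncomputable def coveringNumber (X : Type*) [MetricSpace X] (ε : ℝ) : ℕ :=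
  sInf {n : ℕ | ∃ K : Finset X, K.card = n ∧
    ∀ x : X, ∃ y ∈ K, dist x y ≤ ε}

/-- `η(ρ) = sup_x (1 - P(B_ρ(x)))`. -/
noncomputable def etaFn {X : Type*} [MetricSpace X] [MeasurableSpace X]
    (P : Measure X) (ρ : ℝ) : ℝ :=
  sSup {e : ℝ | ∃ x : X, e = 1 - (P (Metric.closedBall x ρ)).toReal}

/-- the probability that `N` i.i.d. samples from a nondegenerate
probability measure on a compact metric space give an `r`-cover is at least
`1 - 𝒩(𝒳, r/2) · η(r/2)^N`, with `η(r/2) < 1`. -/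
theorem covering_probability {X : Type*} [MetricSpace X] [CompactSpace X]
    [MeasurableSpace X] [BorelSpace X]
    (P : Measure X) [IsProbabilityMeasure P]
    (hnd : ∀ x : X, ∀ U : Set X, IsOpen U → x ∈ U → 0 < P U)
    {Ω : Type*} [MeasurableSpace Ω] (μ : Measure Ω) [IsProbabilityMeasure μ]
    (N : ℕ) (ξ : Fin N → Ω → X) (hmeas : ∀ i, Measurable (ξ i))
    (hindep : iIndepFun ξ μ)
    (hid : ∀ i, Measure.map (ξ i) μ = P)
    (r : ℝ) (hr : 0 < r) :
    etaFn P (r / 2) < 1 ∧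
      1 - (coveringNumber X (r / 2) : ℝ) * etaFn P (r / 2) ^ N ≤
        (μ {ω | ∀ y : X, ∃ i : Fin N, dist y (ξ i ω) ≤ r}).toReal := by
  have hρ : (0:ℝ) < r / 2 := by linarith
  rcases isEmpty_or_nonempty X with hX | hX
  · constructor
    · have hS : {e : ℝ | ∃ x : X, e = 1 - (P (Metric.closedBall x (r/2))).toReal} = ∅ := by
        simp [Set.eq_empty_iff_forall_notMem]
      rw [etaFn, hS, Real.sSup_empty]; norm_num
    · have h0 : coveringNumber X (r / 2) = 0 := by
        apply Nat.sInf_eq_zero.2; left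
        exact ⟨∅, by simp, fun x => (IsEmpty.false x).elim⟩
      have huniv : {ω : Ω | ∀ y : X, ∃ i : Fin N, dist y (ξ i ω) ≤ r} = Set.univ := by
        ext ω; simp
      rw [h0, huniv]; simp
  -- Nonempty case
  -- finite cover at scale r/4
  obtain ⟨t, -, htf, htc⟩ :=
    finite_cover_balls_of_compact (isCompact_univ (X := X)) (half_pos hρ)
  have hTne : htf.toFinset.Nonempty := by
    obtain ⟨x⟩ := hX
    obtain ⟨y, hy, -⟩ := Set.mem_iUnion₂.1 (htc (Set.mem_univ x))
    exact ⟨y, htf.mem_toFinset.2 hy⟩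
  set c : ℝ := htf.toFinset.inf' hTne (fun y => (P (ball y (r/2/2))).toReal) with hc
  have hc0 : 0 < c := by
    rw [hc, Finset.lt_inf'_iff]
    intro y hy
    exact ENNReal.toReal_pos (hnd y _ isOpen_ball (mem_ball_self (half_pos hρ))).ne'
      (measure_ne_top _ _)
  have hball : ∀ x : X, c ≤ (P (closedBall x (r/2))).toReal := by
    intro x
    obtain ⟨y, hy, hxy⟩ := Set.mem_iUnion₂.1 (htc (Set.mem_univ x))
    have hsub : ball y (r/2/2) ⊆ closedBall x (r/2) := by
      intro z hz
      rw [mem_closedBall]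
      have h1 : dist z y < r/2/2 := mem_ball.1 hz
      have h2 : dist x y < r/2/2 := mem_ball.1 hxy
      calc dist z x ≤ dist z y + dist y x := dist_triangle _ _ _
        _ = dist z y + dist x y := by rw [dist_comm y x]
        _ ≤ r/2 := by linarith
    calc c ≤ (P (ball y (r/2/2))).toReal :=
          Finset.inf'_le _ (htf.mem_toFinset.2 hy)
      _ ≤ (P (closedBall x (r/2))).toReal :=
          ENNReal.toReal_mono (measure_ne_top _ _) (measure_mono hsub)
  -- eta bounds
  set S : Set ℝ := {e : ℝ | ∃ x : X, e = 1 - (P (Metric.closedBall x (r/2))).toReal} with hSdef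
  have hSne : S.Nonempty := by
    obtain ⟨x⟩ := hX; exact ⟨_, x, rfl⟩
  have hSub : ∀ e ∈ S, e ≤ 1 - c := by
    rintro e ⟨x, rfl⟩
    linarith [hball x]
  have hbdd : BddAbove S := ⟨1 - c, hSub⟩
  have hη_lt : etaFn P (r/2) < 1 := by
    have := csSup_le hSne hSub
    rw [etaFn]
    calc sSup S ≤ 1 - c := this
      _ < 1 := by linarith
  have hηmem : ∀ x : X, 1 - (P (closedBall x (r/2))).toReal ≤ etaFn P (r/2) := by
    intro x
    exact le_csSup hbdd ⟨x, rfl⟩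
  have hη0 : 0 ≤ etaFn P (r/2) := by
    obtain ⟨x⟩ := hX
    have h1 : (P (closedBall x (r/2))).toReal ≤ 1 := by
      simpa using ENNReal.toReal_mono ENNReal.one_ne_top prob_le_one
    linarith [hηmem x]
  refine ⟨hη_lt, ?_⟩
  -- get an optimal covering set K
  have hne : {n : ℕ | ∃ K : Finset X, K.card = n ∧
      ∀ x : X, ∃ y ∈ K, dist x y ≤ r/2}.Nonempty := by
    refine ⟨htf.toFinset.card, htf.toFinset, rfl, fun x => ?_⟩
    obtain ⟨y, hy, hxy⟩ := Set.mem_iUnion₂.1 (htc (Set.mem_univ x))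
    exact ⟨y, htf.mem_toFinset.2 hy, le_of_lt (lt_of_lt_of_le (mem_ball.1 hxy) (by linarith))⟩
  obtain ⟨K, hKcard, hKcover⟩ : ∃ K : Finset X, K.card = coveringNumber X (r/2) ∧
      ∀ x : X, ∃ y ∈ K, dist x y ≤ r/2 := by
    have := Nat.sInf_mem hne
    obtain ⟨K, hK1, hK2⟩ := this
    exact ⟨K, hK1, hK2⟩
  -- bad event
  set Bad : Set Ω := ⋃ y ∈ K, ⋂ i ∈ Finset.univ, ξ i ⁻¹' (closedBall y (r/2))ᶜ with hBad
  have hBadMeas : MeasurableSet Bad := by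
    refine Set.Finite.measurableSet_biUnion K.finite_toSet (fun y _ => ?_)
    exact MeasurableSet.biInter (Set.to_countable _)
      (fun i _ => (hmeas i) measurableSet_closedBall.compl)
  -- the complement of the cover event is contained in Bad
  have hsub : {ω : Ω | ∀ y : X, ∃ i : Fin N, dist y (ξ i ω) ≤ r}ᶜ ⊆ Bad := by
    intro ω hω
    simp only [Set.mem_compl_iff, Set.mem_setOf_eq, not_forall, not_exists, not_le] at hω
    obtain ⟨y₀, hy₀⟩ := hω
    obtain ⟨y, hyK, hy₀y⟩ := hKcover y₀
    refine Set.mem_biUnion hyK ?_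
    simp only [Set.mem_iInter, Set.mem_preimage, Set.mem_compl_iff, mem_closedBall]
    intro i _
    intro hcon
    have : dist y₀ (ξ i ω) ≤ r := by
      calc dist y₀ (ξ i ω) ≤ dist y₀ y + dist y (ξ i ω) := dist_triangle _ _ _
        _ = dist y₀ y + dist (ξ i ω) y := by rw [dist_comm y (ξ i ω)]
        _ ≤ r/2 + r/2 := add_le_add hy₀y hcon
        _ = r := by ring
    exact absurd this (not_le.2 (hy₀ i))
  -- probability of each piece
  have hpiece : ∀ y : X, μ (⋂ i ∈ Finset.univ, ξ i ⁻¹' (closedBall y (r/2))ᶜ)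
      ≤ ENNReal.ofReal (etaFn P (r/2)) ^ N := by
    intro y
    have hindep' := hindep.measure_inter_preimage_eq_mul (S := Finset.univ)
      (sets := fun _ => (closedBall y (r/2))ᶜ)
      (fun i _ => measurableSet_closedBall.compl)
    rw [hindep']
    have hfac : ∀ i : Fin N, μ (ξ i ⁻¹' (closedBall y (r/2))ᶜ)
        ≤ ENNReal.ofReal (etaFn P (r/2)) := by
      intro i
      have hmap : μ (ξ i ⁻¹' (closedBall y (r/2))ᶜ) = P (closedBall y (r/2))ᶜ := by
        rw [← hid i, Measure.map_apply (hmeas i) measurableSet_closedBall.compl]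
      rw [hmap]
      have h1 : (P (closedBall y (r/2))ᶜ).toReal = 1 - (P (closedBall y (r/2))).toReal := by
        rw [measure_compl measurableSet_closedBall (measure_ne_top _ _),
          measure_univ, ENNReal.toReal_sub_of_le prob_le_one ENNReal.one_ne_top]
        simp
      have h2 : (P (closedBall y (r/2))ᶜ).toReal ≤ etaFn P (r/2) := h1 ▸ hηmem y
      calc P (closedBall y (r/2))ᶜ
          = ENNReal.ofReal (P (closedBall y (r/2))ᶜ).toReal := by
            rw [ENNReal.ofReal_toReal (measure_ne_top _ _)]
        _ ≤ ENNReal.ofReal (etaFn P (r/2)) := ENNReal.ofReal_le_ofReal h2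
    calc ∏ i : Fin N, μ (ξ i ⁻¹' (closedBall y (r/2))ᶜ)
        ≤ ∏ _i : Fin N, ENNReal.ofReal (etaFn P (r/2)) :=
          Finset.prod_le_prod' (fun i _ => hfac i)
      _ = ENNReal.ofReal (etaFn P (r/2)) ^ N := by
          rw [Finset.prod_const, Finset.card_univ, Fintype.card_fin]
  -- bound on Bad
  have hBadBound : μ Bad ≤ (K.card : ℝ≥0∞) * ENNReal.ofReal (etaFn P (r/2)) ^ N := by
    calc μ Bad ≤ ∑ y ∈ K, μ (⋂ i ∈ Finset.univ, ξ i ⁻¹' (closedBall y (r/2))ᶜ) :=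
          measure_biUnion_finset_le K _
      _ ≤ ∑ _y ∈ K, ENNReal.ofReal (etaFn P (r/2)) ^ N :=
          Finset.sum_le_sum (fun y _ => hpiece y)
      _ = (K.card : ℝ≥0∞) * ENNReal.ofReal (etaFn P (r/2)) ^ N := by
          rw [Finset.sum_const, nsmul_eq_mul]
  have hBadReal : (μ Bad).toReal ≤ (coveringNumber X (r/2) : ℝ) * etaFn P (r/2) ^ N := by
    have hrhs_ne : (K.card : ℝ≥0∞) * ENNReal.ofReal (etaFn P (r/2)) ^ N ≠ ⊤ := by
      exact ENNReal.mul_ne_top (ENNReal.natCast_ne_top _)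
        (ENNReal.pow_ne_top ENNReal.ofReal_ne_top)
    calc (μ Bad).toReal
        ≤ ((K.card : ℝ≥0∞) * ENNReal.ofReal (etaFn P (r/2)) ^ N).toReal :=
          ENNReal.toReal_mono hrhs_ne hBadBound
      _ = (K.card : ℝ) * etaFn P (r/2) ^ N := by
          simp [ENNReal.toReal_mul, ENNReal.toReal_pow, ENNReal.toReal_ofReal hη0]
      _ = (coveringNumber X (r/2) : ℝ) * etaFn P (r/2) ^ N := by rw [hKcard]
  -- conclude
  have hcompl : (μ Badᶜ).toReal = 1 - (μ Bad).toReal := by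
    rw [measure_compl hBadMeas (measure_ne_top _ _), measure_univ,
      ENNReal.toReal_sub_of_le prob_le_one ENNReal.one_ne_top]
    simp
  have hmono : (μ Badᶜ).toReal ≤
      (μ {ω : Ω | ∀ y : X, ∃ i : Fin N, dist y (ξ i ω) ≤ r}).toReal := by
    apply ENNReal.toReal_mono (measure_ne_top _ _)
    apply measure_mono
    rw [← Set.compl_subset_compl, compl_compl]
    exact hsub
  linarith [hBadReal, hcompl, hmono]
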